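/- Let M ⊆ B(H) be a von Neumann algebra, let V₁ and V₂ be quantum relations on M ⊆ B(H), and let P denote the set of orthogonal projections in M ⊗̄ B(ℓ²). For all p, q ∈ P the following are equivalent: (a) there exist a₁ ∈ V₁ and a₂ ∈ V₂ with p(a₁a₂ ⊗ 1)q ≠ 0; (b) for every r ∈ P, either there exists a₁ ∈ V₁ with p(a₁⊗1)r ≠ 0, or there exists a₂ ∈ V₂ with (1−r)(a₂⊗1)q ≠ 0. In other words, the intrinsic quantum relation associated to the product V₁V₂ equals the composition R_{V₁} ∘ R_{V₂} = {(p,q) ∈ P × P : for all r ∈ P, (p,r) ∈ R_{V₁} or (1−r, q) ∈ R_{V₂}}. -/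

import Mathlib

open scoped ENNReal NNReal

noncomputable section

universe u

namespace QCG

/-- The weak* (σ-weak) topology on `B(H)`: the topology induced by the functionals
`x ↦ ∑' n, ⟪x (ξ n), η n⟫` indexed by pairs of square-summable sequences `ξ, η : ℕ → H`. -/
def sigmaWeak (H : Type u) [NormedAddCommGroup H] [InnerProductSpace ℂ H] :
    TopologicalSpace (H →L[ℂ] H) :=
  TopologicalSpace.induced
    (fun a (p : {xe : (ℕ → H) × (ℕ → H) //
        Summable (fun n => ‖xe.1 n‖ ^ 2) ∧ Summable (fun n => ‖xe.2 n‖ ^ 2)}) =>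
      (∑' n, (inner ℂ (a (p.1.1 n)) (p.1.2 n) : ℂ)))
    inferInstance

variable {H : Type u} [NormedAddCommGroup H] [InnerProductSpace ℂ H] [CompleteSpace H]

/-- A set of operators is weak*-closed. -/
def IsWeakStarClosed (V : Set (H →L[ℂ] H)) : Prop :=
  @IsClosed _ (sigmaWeak H) V

/-- The weak*-closure of a set of operators. -/
def wclosure (S : Set (H →L[ℂ] H)) : Set (H →L[ℂ] H) :=
  @closure _ (sigmaWeak H) S

/-- A quantum relation on `M ⊆ B(H)`: a weak*-closed linear subspace of `B(H)` which is a
bimodule over the commutant `M'`. -/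
structure IsQRel (M : VonNeumannAlgebra H) (V : Set (H →L[ℂ] H)) : Prop where
  zero_mem : (0 : H →L[ℂ] H) ∈ V
  add_mem : ∀ a b : H →L[ℂ] H, a ∈ V → b ∈ V → a + b ∈ V
  smul_mem : ∀ (c : ℂ) (a : H →L[ℂ] H), a ∈ V → c • a ∈ V
  weakStarClosed : IsWeakStarClosed V
  bimodule : ∀ x ∈ M.commutant, ∀ v ∈ V, ∀ y ∈ M.commutant, x * v * y ∈ V

/-- An (orthogonal) projection belonging to the von Neumann algebra `M`. -/
def IsProjectionIn (M : VonNeumannAlgebra H) (p : H →L[ℂ] H) : Prop :=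
  p ∈ M ∧ IsIdempotentElem p ∧ IsSelfAdjoint p

/-- `s` is the left `M`-support `s_ℓ^M(a)` of `a`: the smallest projection `q ∈ M` with
`q * a = a`.  (For projections `s, p`, the inequality `s ≤ p` is expressed as `p * s = s`.) -/
def IsLeftSupport (M : VonNeumannAlgebra H) (a s : H →L[ℂ] H) : Prop :=
  IsProjectionIn M s ∧ s * a = a ∧
    ∀ p : H →L[ℂ] H, IsProjectionIn M p → p * a = a → p * s = s

/-- `s` is the `M`-support `s^M(ξ)` of the vector `ξ`: the smallest projection `q ∈ M`
with `q ξ = ξ`. -/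
def IsVectorSupport (M : VonNeumannAlgebra H) (ξ : H) (s : H →L[ℂ] H) : Prop :=
  IsProjectionIn M s ∧ s ξ = ξ ∧
    ∀ p : H →L[ℂ] H, IsProjectionIn M p → p ξ = ξ → p * s = s

/-- A quantum coarse structure on `M ⊆ B(H)`: a family of quantum relations containing the
diagonal `M'` and closed under subrelations, adjoints, (weak*-closures of) sums, and
(weak*-closed spans of) products. -/
structure IsQCoarse (M : VonNeumannAlgebra H) (𝒱 : Set (Set (H →L[ℂ] H))) : Prop where
  qrel : ∀ V ∈ 𝒱, IsQRel M V
  diag_mem : (M.commutant : Set (H →L[ℂ] H)) ∈ 𝒱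
  subrel_mem : ∀ V₁ ∈ 𝒱, ∀ V₂ : Set (H →L[ℂ] H), IsQRel M V₂ → V₂ ⊆ V₁ → V₂ ∈ 𝒱
  star_mem : ∀ V ∈ 𝒱, (star '' V) ∈ 𝒱
  add_mem : ∀ V₁ ∈ 𝒱, ∀ V₂ ∈ 𝒱,
    wclosure {v : H →L[ℂ] H | ∃ a ∈ V₁, ∃ b ∈ V₂, v = a + b} ∈ 𝒱
  mul_mem : ∀ V₁ ∈ 𝒱, ∀ V₂ ∈ 𝒱,
    wclosure ((Submodule.span ℂ {v : H →L[ℂ] H | ∃ a ∈ V₁, ∃ b ∈ V₂, v = a * b} :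
      Submodule ℂ (H →L[ℂ] H)) : Set (H →L[ℂ] H)) ∈ 𝒱

/-- `ℓ²(ℕ, H)`, a model of `H ⊗ ℓ²`. -/
abbrev ampSpace (H : Type u) [NormedAddCommGroup H] [InnerProductSpace ℂ H] : Type u :=
  lp (fun _ : ℕ => H) 2

/-- `amp` is the amplification map `a ↦ a ⊗ 1`, acting componentwise on `ℓ²(ℕ, H)`. -/
def IsAmplification (amp : (H →L[ℂ] H) → (ampSpace H →L[ℂ] ampSpace H)) : Prop :=
  ∀ (a : H →L[ℂ] H) (ξ : ampSpace H) (n : ℕ), (amp a ξ) n = a (ξ n)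

/-- `P` is an orthogonal projection in `M ⊗̄ B(ℓ²)`, the commutant in `B(ℓ²(ℕ,H))` of
`{b ⊗ 1 : b ∈ M'}`. -/
def IsAmpProjection (M : VonNeumannAlgebra H)
    (amp : (H →L[ℂ] H) → (ampSpace H →L[ℂ] ampSpace H))
    (P : ampSpace H →L[ℂ] ampSpace H) : Prop :=
  IsIdempotentElem P ∧ IsSelfAdjoint P ∧ ∀ b ∈ M.commutant, amp b * P = P * amp b


section Aux

variable {H : Type u} [NormedAddCommGroup H] [InnerProductSpace ℂ H] [CompleteSpace H]

lemma amp_mul (amp : (H →L[ℂ] H) → (ampSpace H →L[ℂ] ampSpace H))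
    (hamp : IsAmplification amp) (a b : H →L[ℂ] H) :
    amp (a * b) = amp a * amp b := by
  refine ContinuousLinearMap.ext fun ξ => lp.ext ?_
  funext n
  rw [hamp, ContinuousLinearMap.mul_apply, ContinuousLinearMap.mul_apply, hamp, hamp]

lemma amp_star (amp : (H →L[ℂ] H) → (ampSpace H →L[ℂ] ampSpace H))
    (hamp : IsAmplification amp) (a : H →L[ℂ] H) :
    star (amp a) = amp (star a) := by
  rw [ContinuousLinearMap.star_eq_adjoint, eq_comm, ContinuousLinearMap.eq_adjoint_iff]
  intro x y
  rw [lp.inner_eq_tsum, lp.inner_eq_tsum]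
  congr 1
  funext n
  rw [hamp, hamp, ContinuousLinearMap.star_eq_adjoint, ContinuousLinearMap.adjoint_inner_left]

end Aux

/-- Composition of intrinsic quantum relations: for quantum relations `V₁, V₂` on
`M ⊆ B(H)` and projections `p, q ∈ M ⊗̄ B(ℓ²)`, one has `(p,q) ∈ R_{V₁V₂}` if and only if
for every projection `r ∈ M ⊗̄ B(ℓ²)`, either `(p,r) ∈ R_{V₁}` or `(1-r, q) ∈ R_{V₂}`. -/
theorem statement2 (M : VonNeumannAlgebra H) (V₁ V₂ : Set (H →L[ℂ] H))
    (hV₁ : IsQRel M V₁) (hV₂ : IsQRel M V₂)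
    (amp : (H →L[ℂ] H) → (ampSpace H →L[ℂ] ampSpace H)) (hamp : IsAmplification amp)
    (p q : ampSpace H →L[ℂ] ampSpace H)
    (hp : IsAmpProjection M amp p) (hq : IsAmpProjection M amp q) :
    (∃ a₁ ∈ V₁, ∃ a₂ ∈ V₂, p * amp (a₁ * a₂) * q ≠ 0) ↔
      ∀ r : ampSpace H →L[ℂ] ampSpace H, IsAmpProjection M amp r →
        (∃ a₁ ∈ V₁, p * amp a₁ * r ≠ 0) ∨ (∃ a₂ ∈ V₂, (1 - r) * amp a₂ * q ≠ 0) := by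
  have hmul := amp_mul amp hamp
  constructor
  · rintro ⟨a₁, ha₁, a₂, ha₂, hne⟩ r hr
    by_contra hcon
    push_neg at hcon
    obtain ⟨h1, h2⟩ := hcon
    apply hne
    have e2 : r * (amp a₂ * q) = amp a₂ * q := by
      have h0 : (1 - r) * (amp a₂ * q) = 0 := by
        rw [← mul_assoc]; exact h2 a₂ ha₂
      rw [sub_mul, one_mul, sub_eq_zero] at h0
      exact h0.symm
    calc p * amp (a₁ * a₂) * q = (p * amp a₁ * r) * (amp a₂ * q) := by
          rw [hmul, mul_assoc (p * amp a₁) r, e2]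
          simp only [mul_assoc]
      _ = 0 := by rw [h1 a₁ ha₁, zero_mul]
  · intro hall
    set S : Set (ampSpace H) := {v | ∃ a ∈ V₂, ∃ ξ, v = amp a (q ξ)} with hS
    set K : Submodule ℂ (ampSpace H) := (Submodule.span ℂ S).topologicalClosure with hK
    have hKclosed : IsClosed (K : Set (ampSpace H)) := by
      rw [hK]; exact Submodule.isClosed_topologicalClosure _
    haveI : CompleteSpace K := hKclosed.completeSpace_coe
    set r : ampSpace H →L[ℂ] ampSpace H := K.subtypeL ∘L K.orthogonalProjectionOnto with hrdef
    have hrK : ∀ ξ, r ξ ∈ K := fun ξ => (K.orthogonalProjectionOnto ξ).2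
    have hrself : ∀ v ∈ K, r v = v := fun v hv => (Submodule.starProjection_eq_self_iff (K := K)).mpr hv
    have hSK : ∀ v ∈ S, v ∈ K :=
      fun v hv => (Submodule.span ℂ S).le_topologicalClosure (Submodule.subset_span hv)
    -- K is invariant under amp b for b ∈ M'
    have hKinv : ∀ b ∈ M.commutant, ∀ v ∈ K, amp b v ∈ K := by
      intro b hb v hv
      have hclosed : IsClosed ((K.comap (amp b).toLinearMap : Submodule ℂ (ampSpace H)) :
          Set (ampSpace H)) :=
        hKclosed.preimage (amp b).continuous
      have hle : Submodule.span ℂ S ≤ K.comap (amp b).toLinearMap := by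
        rw [Submodule.span_le]
        rintro w ⟨a, ha, ξ, rfl⟩
        have : amp b (amp a (q ξ)) = amp (b * a) (q ξ) := by
          rw [hmul]; rfl
        refine Submodule.mem_comap.mpr ?_
        show amp b (amp a (q ξ)) ∈ K
        rw [this]
        refine hSK _ ⟨b * a, ?_, ξ, rfl⟩
        simpa using hV₂.bimodule b hb a ha 1 (one_mem _)
      exact (Submodule.topologicalClosure_minimal _ hle hclosed) hv
    -- r commutes with amplifications of the commutant
    have hcomm : ∀ b ∈ M.commutant, amp b * r = r * amp b := by
      intro b hb
      refine ContinuousLinearMap.ext fun ξ => ?_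
      have hu : amp b (r ξ) ∈ K := hKinv b hb _ (hrK ξ)
      have hw : amp b (ξ - r ξ) ∈ Kᗮ := by
        rw [Submodule.mem_orthogonal]
        intro u hu'
        have hadj : (inner ℂ (u : ampSpace H) (amp b (ξ - r ξ)) : ℂ) =
            inner ℂ (amp (star b) u) (ξ - r ξ) := by
          rw [← amp_star amp hamp, ContinuousLinearMap.star_eq_adjoint,
            ContinuousLinearMap.adjoint_inner_left]
        rw [hadj]
        have hw' : ξ - r ξ ∈ Kᗮ := Submodule.sub_starProjection_mem_orthogonal (K := K) ξ
        have hmem : amp (star b) u ∈ K := hKinv (star b) (star_mem hb) u hu'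
        exact (Submodule.mem_orthogonal K _).mp hw' _ hmem
      have hrw : r (amp b (ξ - r ξ)) = 0 := by
        have := Submodule.orthogonalProjectionOnto_apply_of_mem_orthogonal hw
        show (K.subtypeL) (K.orthogonalProjectionOnto (amp b (ξ - r ξ))) = 0
        rw [this]; rfl
      have hsplit : amp b ξ = amp b (r ξ) + amp b (ξ - r ξ) := by
        rw [← map_add]; congr 1; abel
      show (amp b * r) ξ = (r * amp b) ξ
      rw [ContinuousLinearMap.mul_apply, ContinuousLinearMap.mul_apply]
      calc amp b (r ξ) = r (amp b (r ξ)) + r (amp b (ξ - r ξ)) := by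
            rw [hrself _ hu, hrw, add_zero]
        _ = r (amp b ξ) := by rw [← map_add, ← hsplit]
    have hr : IsAmpProjection M amp r := by
      refine ⟨?_, ?_, hcomm⟩
      · refine ContinuousLinearMap.ext fun ξ => ?_
        show r (r ξ) = r ξ
        exact hrself _ (hrK ξ)
      · exact isSelfAdjoint_starProjection K
    -- the second alternative fails for r
    have hno2 : ∀ a₂ ∈ V₂, (1 - r) * amp a₂ * q = 0 := by
      intro a₂ ha₂
      refine ContinuousLinearMap.ext fun ξ => ?_
      have hmem : amp a₂ (q ξ) ∈ K := hSK _ ⟨a₂, ha₂, ξ, rfl⟩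
      show (1 - r) (amp a₂ (q ξ)) = 0
      rw [ContinuousLinearMap.sub_apply, ContinuousLinearMap.one_apply, hrself _ hmem,
        sub_self]
      
    obtain ⟨a₁, ha₁, hne⟩ := (hall r hr).resolve_right (by
      rintro ⟨a₂, ha₂, hne2⟩
      exact hne2 (hno2 a₂ ha₂))
    -- extract a vector
    obtain ⟨ξ, hξ⟩ : ∃ ξ, (p * amp a₁ * r) ξ ≠ 0 := by
      by_contra hc
      push_neg at hc
      exact hne (ContinuousLinearMap.ext hc)
    set T : ampSpace H →L[ℂ] ampSpace H := p ∘L amp a₁ with hT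
    have hTr : T (r ξ) ≠ 0 := hξ
    have hgen : ∃ v ∈ S, T v ≠ 0 := by
      by_contra hc
      push_neg at hc
      have hle : Submodule.span ℂ S ≤ LinearMap.ker (T : ampSpace H →ₗ[ℂ] ampSpace H) :=
        Submodule.span_le.mpr fun v hv => LinearMap.mem_ker.mpr (hc v hv)
      have : K ≤ LinearMap.ker (T : ampSpace H →ₗ[ℂ] ampSpace H) :=
        Submodule.topologicalClosure_minimal _ hle (ContinuousLinearMap.isClosed_ker T)
      exact hTr (this (hrK ξ))
    obtain ⟨v, ⟨a₂, ha₂, ξ', rfl⟩, hv⟩ := hgen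
    refine ⟨a₁, ha₁, a₂, ha₂, fun h0 => hv ?_⟩
    have : (p * amp (a₁ * a₂) * q) ξ' = 0 := by rw [h0]; rfl
    calc T (amp a₂ (q ξ')) = (p * amp (a₁ * a₂) * q) ξ' := by
          rw [hmul]; rfl
      _ = 0 := this


end QCG
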